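/- arXiv:0807.2069 — 2 statements merged into one kernel-verified Lean document; each statement's English description precedes it below -/
import Mathlib

section
/- Let H be an infinite-dimensional separable Hilbert space. The standard Gaussian cylinder set measure on H is not countably additive: there is no Borel probability measure μ on H such that for every finite-dimensional subspace V with orthogonal projection π_V and every Borel U ⊆ V, μ(π_V^{−1}(U)) equals the standard Gaussian measure of U in V. -/
open MeasureTheory ProbabilityTheory

lemma gauss_Icc_lt_one (R : ℝ) : gaussianReal 0 1 (Set.Icc (-R) R) < 1 := by
  have hac := gaussianReal_absolutelyContinuous' 0 (v := 1) one_ne_zero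
  have hpos : 0 < gaussianReal 0 1 (Set.Ioi R) := by
    rw [pos_iff_ne_zero]
    intro h
    have := hac h
    simp [Real.volume_Ioi] at this
  have hd : Disjoint (Set.Icc (-R) R) (Set.Ioi R) :=
    Set.disjoint_left.mpr fun x hx hx' => absurd hx.2 (not_le.mpr hx')
  have hle : gaussianReal 0 1 (Set.Icc (-R) R) + gaussianReal 0 1 (Set.Ioi R) ≤ 1 := by
    rw [← measure_union hd measurableSet_Ioi]
    exact prob_le_one
  calc gaussianReal 0 1 (Set.Icc (-R) R)
      < gaussianReal 0 1 (Set.Icc (-R) R) + gaussianReal 0 1 (Set.Ioi R) :=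
        ENNReal.lt_add_right (measure_ne_top _ _) hpos.ne'
    _ ≤ 1 := hle

lemma euclid_coord_le {n : ℕ} (x : EuclideanSpace ℝ (Fin n)) (i : Fin n) : |x i| ≤ ‖x‖ := by
  rw [EuclideanSpace.norm_eq]
  rw [← Real.sqrt_sq_eq_abs]
  apply Real.sqrt_le_sqrt
  calc x i ^ 2 ≤ ∑ j, x j ^ 2 :=
        Finset.single_le_sum (fun j _ => sq_nonneg (x j)) (Finset.mem_univ i)
    _ = ∑ j, ‖x j‖ ^ 2 := by simp [Real.norm_eq_abs, sq_abs]

/-- On an infinite-dimensional separable real Hilbert space, the standard Gaussian cylinder set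
measure is not countably additive: there is no Borel probability measure `μ` such that for every
finite-dimensional subspace `V` (identified with Euclidean space via a linear isometry `e`) and
every Borel `U ⊆ V`, `μ(π_V⁻¹(U))` is the standard Gaussian measure of `U`. -/
theorem stmt7 (H : Type*) [NormedAddCommGroup H] [InnerProductSpace ℝ H] [CompleteSpace H]
    [SecondCountableTopology H] [MeasurableSpace H] [BorelSpace H]
    (h_infdim : ¬ FiniteDimensional ℝ H) :
    ¬ ∃ μ : Measure H, IsProbabilityMeasure μ ∧
      ∀ (n : ℕ) (V : Submodule ℝ H) [FiniteDimensional ℝ V]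
        (e : EuclideanSpace ℝ (Fin n) ≃ₗᵢ[ℝ] V) (U : Set V), MeasurableSet U →
          μ ((V.orthogonalProjectionOnto) ⁻¹' U)
            = Measure.map (fun x : Fin n → ℝ => e (WithLp.toLp 2 x))
                (Measure.pi fun _ : Fin n => gaussianReal 0 1) U := by
  rintro ⟨μ, hμ, hspec⟩
  -- for each n, a finite-dimensional subspace of dimension n with an isometry from ℝⁿ
  have hrank : ∀ n : ℕ, (n : Cardinal) ≤ Module.rank ℝ H := by
    intro n
    refine le_trans (le_of_lt (Cardinal.nat_lt_aleph0 n)) ?_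
    by_contra h
    exact h_infdim (Module.rank_lt_aleph0_iff.mp (not_le.mp h))
  have hsub : ∀ n : ℕ, ∃ (V : Submodule ℝ H) (_ : FiniteDimensional ℝ V),
      Nonempty (EuclideanSpace ℝ (Fin n) ≃ₗᵢ[ℝ] V) := by
    intro n
    obtain ⟨s, hcard, hli⟩ := le_rank_iff_exists_linearIndependent_finset.mp (hrank n)
    refine ⟨Submodule.span ℝ (s : Set H), inferInstance, ?_⟩
    have hfr : Module.finrank ℝ (Submodule.span ℝ (s : Set H)) = n := by
      rw [finrank_span_finset_eq_card hli, hcard]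
    exact ⟨((stdOrthonormalBasis ℝ (Submodule.span ℝ (s : Set H))).reindex
      (finCongr hfr)).repr.symm⟩
  -- key estimate
  have key : ∀ (R : ℝ) (n : ℕ),
      μ (Metric.closedBall (0 : H) R) ≤ (gaussianReal 0 1 (Set.Icc (-R) R)) ^ n := by
    intro R n
    obtain ⟨V, hV, ⟨e⟩⟩ := hsub n
    have hU : MeasurableSet (Metric.closedBall (0 : V) R) := measurableSet_closedBall
    have hball : Metric.closedBall (0 : H) R ⊆
        (V.orthogonalProjectionOnto) ⁻¹' (Metric.closedBall (0 : V) R) := by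
      intro x hx
      simp only [Set.mem_preimage, Metric.mem_closedBall, dist_zero_right] at hx ⊢
      calc ‖(V.orthogonalProjectionOnto) x‖ ≤ ‖(V.orthogonalProjectionOnto : H →L[ℝ] V)‖ * ‖x‖ :=
            (V.orthogonalProjectionOnto).le_opNorm x
        _ ≤ 1 * ‖x‖ := by
            gcongr
            exact Submodule.orthogonalProjectionOnto_norm_le (K := V)
        _ ≤ R := by simpa using hx
    have hmeas : Measurable (fun x : Fin n → ℝ => e (WithLp.toLp 2 x)) :=
      e.continuous.measurable.comp
        (PiLp.continuous_toLp (p := 2) (β := fun _ : Fin n => ℝ)).measurable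
    calc μ (Metric.closedBall (0 : H) R)
        ≤ μ ((V.orthogonalProjectionOnto) ⁻¹' (Metric.closedBall (0 : V) R)) := measure_mono hball
      _ = Measure.map (fun x : Fin n → ℝ => e (WithLp.toLp 2 x))
            (Measure.pi fun _ : Fin n => gaussianReal 0 1) (Metric.closedBall (0 : V) R) :=
          hspec n V e _ hU
      _ = (Measure.pi fun _ : Fin n => gaussianReal 0 1)
            ((fun x : Fin n → ℝ => e (WithLp.toLp 2 x)) ⁻¹' (Metric.closedBall (0 : V) R)) :=
          Measure.map_apply hmeas hU
      _ ≤ (Measure.pi fun _ : Fin n => gaussianReal 0 1)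
            (Set.pi Set.univ fun _ : Fin n => Set.Icc (-R) R) := by
          apply measure_mono
          intro x hx
          simp only [Set.mem_preimage, Metric.mem_closedBall, dist_zero_right] at hx
          rw [e.norm_map] at hx
          intro i _
          have := euclid_coord_le (WithLp.toLp 2 x) i
          rw [PiLp.toLp_apply] at this
          constructor
          · linarith [(abs_le.mp (this.trans hx)).1]
          · linarith [(abs_le.mp (this.trans hx)).2]
      _ = ∏ _i : Fin n, gaussianReal 0 1 (Set.Icc (-R) R) := Measure.pi_pi _ _
      _ = (gaussianReal 0 1 (Set.Icc (-R) R)) ^ n := by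
          rw [Finset.prod_const, Finset.card_univ, Fintype.card_fin]
  -- hence every closed ball is null
  have hball0 : ∀ R : ℝ, μ (Metric.closedBall (0 : H) R) = 0 := by
    intro R
    refine le_antisymm ?_ zero_le
    refine ge_of_tendsto' (ENNReal.tendsto_pow_atTop_nhds_zero_of_lt_one (gauss_Icc_lt_one R)) ?_
    exact fun n => key R n
  -- contradiction with μ univ = 1
  have huniv : (Set.univ : Set H) ⊆ ⋃ k : ℕ, Metric.closedBall (0 : H) k := by
    intro x _
    obtain ⟨k, hk⟩ := exists_nat_ge ‖x‖
    exact Set.mem_iUnion.mpr ⟨k, by simpa [Metric.mem_closedBall, dist_zero_right] using hk⟩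
  have : (1 : ENNReal) ≤ 0 := by
    calc (1 : ENNReal) = μ Set.univ := hμ.measure_univ.symm
      _ ≤ μ (⋃ k : ℕ, Metric.closedBall (0 : H) k) := measure_mono huniv
      _ ≤ ∑' k : ℕ, μ (Metric.closedBall (0 : H) k) := measure_iUnion_le _
      _ = 0 := by simp [hball0]
  simp at this
end

section
/- Let H be a separable Hilbert space and A a positive injective trace-class (or Hilbert–Schmidt) operator on H. Then the norm ‖x‖_A = ‖Ax‖_H is a measurable norm on H in the sense of Gross: for every ε > 0 there is a finite-dimensional subspace V_ε ⊆ H such that for every finite-dimensional subspace W orthogonal to V_ε, the standard Gaussian measure on W of {x ∈ W : ‖Ax‖ > ε} is less than ε. -/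
open MeasureTheory ProbabilityTheory

open Real Set

section Gauss
lemma gaussPDF_even (x : ℝ) : gaussianPDFReal 0 1 (-x) = gaussianPDFReal 0 1 x := by
  simp [gaussianPDFReal, neg_sq]

lemma gauss_repr : gaussianReal 0 1
    = (volume : Measure ℝ).withDensity fun x => ((gaussianPDFReal 0 1 x).toNNReal : ENNReal) := by
  rw [gaussianReal_of_var_ne_zero 0 one_ne_zero]; rfl

lemma gauss_integral_eq (g : ℝ → ℝ) :
    ∫ x, g x ∂(gaussianReal 0 1) = ∫ x, gaussianPDFReal 0 1 x * g x := by
  rw [gauss_repr, integral_withDensity_eq_integral_smul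
    ((measurable_gaussianPDFReal 0 1).real_toNNReal) g]
  congr 1; ext x
  simp [NNReal.smul_def, Real.coe_toNNReal _ (gaussianPDFReal_nonneg 0 1 x)]

lemma gauss_integrable_iff (g : ℝ → ℝ) :
    Integrable g (gaussianReal 0 1) ↔ Integrable (fun x => gaussianPDFReal 0 1 x * g x) := by
  rw [gauss_repr, integrable_withDensity_iff_integrable_smul
    ((measurable_gaussianPDFReal 0 1).real_toNNReal)]
  constructor <;> intro h <;> refine h.congr (Filter.Eventually.of_forall fun x => ?_) <;>
    simp [NNReal.smul_def, Real.coe_toNNReal _ (gaussianPDFReal_nonneg 0 1 x)]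

lemma gauss_pdf_eq (x : ℝ) :
    gaussianPDFReal 0 1 x = (√(2 * π))⁻¹ * rexp (-(1/2) * x ^ 2) := by
  simp only [gaussianPDFReal, NNReal.coe_one, mul_one, sub_zero]
  ring_nf

lemma gauss_integrable_id : Integrable (fun x : ℝ => x) (gaussianReal 0 1) := by
  rw [gauss_integrable_iff]
  have h := (integrable_mul_exp_neg_mul_sq (b := 1/2) (by norm_num)).const_mul (√(2 * π))⁻¹
  refine h.congr (Filter.Eventually.of_forall fun x => ?_)
  simp only [gauss_pdf_eq]; ring

lemma gauss_integrable_sq : Integrable (fun x : ℝ => x ^ 2) (gaussianReal 0 1) := by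
  rw [gauss_integrable_iff]
  have h := (integrable_rpow_mul_exp_neg_mul_sq (b := 1/2) (by norm_num)
    (s := 2) (by norm_num)).const_mul (√(2 * π))⁻¹
  refine h.congr (Filter.Eventually.of_forall fun x => ?_)
  simp only [gauss_pdf_eq, show ((2:ℝ)) = ((2:ℕ):ℝ) by norm_num, Real.rpow_natCast]
  ring

lemma gauss_mean : ∫ x, x ∂(gaussianReal 0 1) = 0 := by
  rw [gauss_integral_eq]
  have hneg : ∫ x : ℝ, gaussianPDFReal 0 1 (-x) * (-x)
      = ∫ x : ℝ, gaussianPDFReal 0 1 x * x :=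
    (Measure.measurePreserving_neg (volume : Measure ℝ)).integral_comp
      (Homeomorph.neg ℝ).measurableEmbedding (fun x => gaussianPDFReal 0 1 x * x)
  have : ∫ x : ℝ, gaussianPDFReal 0 1 x * x = - ∫ x : ℝ, gaussianPDFReal 0 1 x * x := by
    nth_rewrite 1 [← hneg]
    rw [← integral_neg]
    congr 1; ext x
    rw [gaussPDF_even]; ring
  linarith

lemma gauss_variance : ∫ x, x ^ 2 ∂(gaussianReal 0 1) = 1 := by
  rw [gauss_integral_eq]
  have h1 : ∀ x : ℝ, gaussianPDFReal 0 1 x * x ^ 2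
      = (fun t : ℝ => (√(2*π))⁻¹ * (t ^ (2:ℝ) * rexp (-(1/2) * t ^ (2:ℝ)))) |x| := by
    intro x
    simp only [show ((2:ℝ)) = ((2:ℕ):ℝ) by norm_num, Real.rpow_natCast, sq_abs, gauss_pdf_eq]
    ring
  calc ∫ x, gaussianPDFReal 0 1 x * x ^ 2
      = ∫ x : ℝ, (fun t : ℝ => (√(2*π))⁻¹ * (t ^ (2:ℝ) * rexp (-(1/2) * t ^ (2:ℝ)))) |x| := by
        congr 1; ext x; exact h1 x
    _ = 2 * ∫ t in Ioi (0:ℝ), (√(2*π))⁻¹ * (t ^ (2:ℝ) * rexp (-(1/2) * t ^ (2:ℝ))) :=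
        integral_comp_abs (f := fun t : ℝ => (√(2*π))⁻¹ * (t ^ (2:ℝ) * rexp (-(1/2) * t ^ (2:ℝ))))
    _ = 2 * ((√(2*π))⁻¹ * ∫ t in Ioi (0:ℝ), t ^ (2:ℝ) * rexp (-(1/2) * t ^ (2:ℝ))) := by
        rw [integral_const_mul]
    _ = 1 := by
        rw [integral_rpow_mul_exp_neg_mul_rpow two_pos (by norm_num) (by norm_num)]
        have hG : Real.Gamma (((2:ℝ)+1)/2) = √π / 2 := by
          rw [show ((2:ℝ)+1)/2 = 1/2 + 1 by norm_num, Real.Gamma_add_one (by norm_num),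
            Real.Gamma_one_half_eq]
          ring
        have hpow : ((1:ℝ)/2) ^ (-((2:ℝ)+1)/2) = √8 := by
          rw [show (-((2:ℝ)+1)/2) = ((-3 : ℤ) : ℝ) * (1/2 : ℝ) by push_cast; ring,
            Real.rpow_mul (by norm_num), Real.rpow_intCast,
            show ((1:ℝ)/2) ^ (-3 : ℤ) = 8 by norm_num, ← Real.sqrt_eq_rpow]
        rw [hG, hpow]
        have h8 : √8 = 2 * √2 := by
          rw [show (8:ℝ) = 2^2 * 2 by norm_num, Real.sqrt_mul (by positivity),
            Real.sqrt_sq (by norm_num)]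
        have h2pi : √(2*π) = √2 * √π := Real.sqrt_mul (by norm_num) π
        rw [h8, h2pi]
        have hs2 : √2 ≠ 0 := by positivity
        have hsp : √π ≠ 0 := by positivity
        field_simp

lemma pi_moment (γ : Measure ℝ) [IsProbabilityMeasure γ]
    (h1i : Integrable (fun x : ℝ => x) γ) (h2i : Integrable (fun x : ℝ => x ^ 2) γ)
    (h1 : ∫ x, x ∂γ = 0) (h2 : ∫ x, x ^ 2 ∂γ = 1)
    {n : ℕ} (j k : Fin n) :
    Integrable (fun x : Fin n → ℝ => x j * x k) (Measure.pi fun _ => γ) ∧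
    ∫ x : Fin n → ℝ, x j * x k ∂(Measure.pi fun _ => γ) = if j = k then 1 else 0 := by
  letI : MeasureSpace ℝ := ⟨γ⟩
  haveI : IsProbabilityMeasure (volume : Measure ℝ) := ‹IsProbabilityMeasure γ›
  have hvol : (volume : Measure (Fin n → ℝ)) = Measure.pi fun _ => γ := rfl
  set f : Fin n → ℝ → ℝ := fun i t => (if i = j then t else 1) * (if i = k then t else 1)
    with hf
  have hprod : ∀ x : Fin n → ℝ, x j * x k = ∏ i, f i (x i) := by
    intro x
    rw [hf]
    simp only
    rw [Finset.prod_mul_distrib, Finset.prod_ite_eq' Finset.univ j (fun i => x i),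
      Finset.prod_ite_eq' Finset.univ k (fun i => x i)]
    simp
  have htt : Integrable (fun t : ℝ => t * t) volume := by simp only [pow_two] at h2i; exact h2i
  have ht1 : Integrable (fun t : ℝ => t) volume := h1i
  have hint : ∀ i, Integrable (f i) volume := by
    intro i
    rcases eq_or_ne i j with rfl | hij
    · rcases eq_or_ne i k with rfl | hik
      · simpa only [hf, if_pos rfl, if_true] using htt
      · simpa only [hf, if_pos rfl, if_true, if_neg hik, mul_one] using ht1
    · rcases eq_or_ne i k with rfl | hik
      · simpa only [hf, if_pos rfl, if_true, if_neg hij, one_mul] using ht1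
      · simpa only [hf, if_neg hij, if_neg hik, mul_one] using integrable_const (1 : ℝ)
  have hIval : ∀ i, (∫ t : ℝ, f i t)
      = (if i = j then (if i = k then 1 else 0) else (if i = k then 0 else 1)) := by
    intro i
    rcases eq_or_ne i j with rfl | hij
    · rcases eq_or_ne i k with rfl | hik
      · simp only [hf, if_pos rfl, ← pow_two]
        exact h2
      · simp only [hf, if_pos rfl, if_neg hik, mul_one]
        exact h1
    · rcases eq_or_ne i k with rfl | hik
      · simp only [hf, if_pos rfl, if_neg hij, one_mul]
        exact h1
      · simp only [hf, if_neg hij, if_neg hik, mul_one]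
        simp
  have key := MeasureTheory.integral_fintype_prod_eq_prod (𝕜 := ℝ) (ι := Fin n)
    (fun i (t : ℝ) => f i t) (μ := fun _ => volume)
  have hintp : Integrable (fun x : Fin n → ℝ => ∏ i, f i (x i)) volume :=
    MeasureTheory.Integrable.fintype_prod hint
  constructor
  · rw [← hvol]
    exact hintp.congr (Filter.Eventually.of_forall fun x => (hprod x).symm)
  · rw [← hvol]
    calc ∫ x : Fin n → ℝ, x j * x k
        = ∫ x : Fin n → ℝ, ∏ i, f i (x i) := by
          congr 1; ext x; exact hprod x
      _ = ∏ i, ∫ t : ℝ, f i t := key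
      _ = if j = k then 1 else 0 := by
          by_cases hjk : j = k
          · subst hjk
            simp only [if_pos rfl]
            rw [Finset.prod_congr rfl fun i _ => hIval i]
            apply Finset.prod_eq_one
            intro i _
            by_cases h : i = j <;> simp [h]
          · simp only [if_neg hjk]
            refine Finset.prod_eq_zero (Finset.mem_univ j) ?_
            rw [hIval j]
            simp [hjk]

lemma lincomb_sq (γ : Measure ℝ) [IsProbabilityMeasure γ]
    (h1i : Integrable (fun x : ℝ => x) γ) (h2i : Integrable (fun x : ℝ => x ^ 2) γ)
    (h1 : ∫ x, x ∂γ = 0) (h2 : ∫ x, x ^ 2 ∂γ = 1)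
    {n : ℕ} (c : Fin n → ℝ) :
    Integrable (fun x : Fin n → ℝ => (∑ j, c j * x j) ^ 2) (Measure.pi fun _ => γ) ∧
    ∫ x : Fin n → ℝ, (∑ j, c j * x j) ^ 2 ∂(Measure.pi fun _ => γ) = ∑ j, c j ^ 2 := by
  have hmom := fun j k : Fin n => pi_moment γ h1i h2i h1 h2 j k
  have hexp : ∀ x : Fin n → ℝ, (∑ j, c j * x j) ^ 2
      = ∑ j, ∑ k, (c j * c k) * (x j * x k) := by
    intro x
    rw [pow_two, Finset.sum_mul_sum]
    refine Finset.sum_congr rfl fun j _ => Finset.sum_congr rfl fun k _ => by ring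
  have hint : ∀ j k : Fin n, Integrable
      (fun x : Fin n → ℝ => (c j * c k) * (x j * x k)) (Measure.pi fun _ => γ) :=
    fun j k => (hmom j k).1.const_mul _
  constructor
  · refine (Integrable.congr ?_ (Filter.Eventually.of_forall fun x => (hexp x).symm))
    exact integrable_finset_sum _ fun j _ => integrable_finset_sum _ fun k _ => hint j k
  · calc ∫ x : Fin n → ℝ, (∑ j, c j * x j) ^ 2 ∂(Measure.pi fun _ => γ)
        = ∫ x : Fin n → ℝ, ∑ j, ∑ k, (c j * c k) * (x j * x k) ∂(Measure.pi fun _ => γ) := by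
          congr 1; ext x; exact hexp x
      _ = ∑ j, ∑ k, ∫ x : Fin n → ℝ, (c j * c k) * (x j * x k) ∂(Measure.pi fun _ => γ) := by
          rw [integral_finset_sum _ fun j _ => integrable_finset_sum _ fun k _ => hint j k]
          exact Finset.sum_congr rfl fun j _ => integral_finset_sum _ fun k _ => hint j k
      _ = ∑ j, ∑ k, (c j * c k) * (if j = k then 1 else 0) := by
          refine Finset.sum_congr rfl fun j _ => Finset.sum_congr rfl fun k _ => ?_
          rw [MeasureTheory.integral_const_mul, (hmom j k).2]
      _ = ∑ j, c j ^ 2 := by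
          refine Finset.sum_congr rfl fun j _ => ?_
          rw [Finset.sum_congr rfl fun k (_ : k ∈ Finset.univ) =>
            (by rw [mul_ite, mul_one, mul_zero] :
              (c j * c k) * (if j = k then 1 else 0) = if j = k then c j * c k else 0)]
          rw [Finset.sum_ite_eq Finset.univ j fun k => c j * c k]
          simp [pow_two]

open RealInnerProductSpace in
lemma eig_coord {H : Type*} [NormedAddCommGroup H] [InnerProductSpace ℝ H] [CompleteSpace H]
    (A : H →L[ℝ] H) (b : HilbertBasis ℕ ℝ H) (Λ : ℕ → ℝ)
    (heig : ∀ i, A (b i) = Λ i • b i) (y : H) (i : ℕ) :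
    ⟪A y, b i⟫ = Λ i * ⟪y, b i⟫ := by
  have h0 := (b.hasSum_repr y).mapL ((innerSL ℝ (b i)).comp A)
  have h1 : ∀ j, ((innerSL ℝ (b i)).comp A) (b.repr y j • b j)
      = if j = i then Λ i * b.repr y i else 0 := by
    intro j
    have : ((innerSL ℝ (b i)).comp A) (b.repr y j • b j)
        = b.repr y j * (Λ j * ⟪b i, b j⟫) := by
      simp [heig j, inner_smul_right, real_inner_smul_right]
    rw [this, orthonormal_iff_ite.mp b.orthonormal i j]
    rcases eq_or_ne j i with rfl | hj
    · simp [mul_comm]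
    · simp [Ne.symm hj, hj]
  rw [funext h1] at h0
  have h2 : HasSum (fun j => if j = i then Λ i * b.repr y i else 0) (Λ i * b.repr y i) :=
    hasSum_ite_eq i _
  have h3 : (((innerSL ℝ (b i)).comp A) y) = Λ i * b.repr y i := h0.unique h2
  simp only [ContinuousLinearMap.comp_apply, innerSL_apply_apply] at h3
  rw [real_inner_comm, h3, b.repr_apply_apply, real_inner_comm (b i) y]

open RealInnerProductSpace in
lemma spectral_hasSum {H : Type*} [NormedAddCommGroup H] [InnerProductSpace ℝ H] [CompleteSpace H]
    (A : H →L[ℝ] H) (b : HilbertBasis ℕ ℝ H) (Λ : ℕ → ℝ)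
    (heig : ∀ i, A (b i) = Λ i • b i) (y : H) :
    HasSum (fun i => (Λ i * ⟪y, b i⟫) ^ 2) (‖A y‖ ^ 2) := by
  have h := b.hasSum_inner_mul_inner (A y) (A y)
  have heq : ∀ i, ⟪A y, b i⟫ * ⟪b i, A y⟫ = (Λ i * ⟪y, b i⟫) ^ 2 := by
    intro i
    have e1 : ⟪b i, A y⟫ = Λ i * ⟪y, b i⟫ := by
      rw [real_inner_comm]; exact eig_coord A b Λ heig y i
    rw [real_inner_comm (A y) (b i), eig_coord A b Λ heig y i]; ring
  rw [funext heq] at h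
  rwa [real_inner_self_eq_norm_sq] at h

end Gauss


open RealInnerProductSpace

/-- Gross measurability of `‖x‖_A = ‖Ax‖` for a positive injective Hilbert–Schmidt operator `A`
on a separable Hilbert space `H` (given here by an orthonormal eigenbasis `b` with positive,
square-summable eigenvalues `Λ`): for every `ε > 0` there is a finite-dimensional subspace
`V_ε ⊆ H` such that for every finite-dimensional `W ⟂ V_ε` the standard Gaussian measure on `W`
of `{x ∈ W : ‖Ax‖ > ε}` is less than `ε`. -/
theorem stmt8 (H : Type*) [NormedAddCommGroup H] [InnerProductSpace ℝ H] [CompleteSpace H]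
    [SecondCountableTopology H] [MeasurableSpace H] [BorelSpace H]
    (A : H →L[ℝ] H) (b : HilbertBasis ℕ ℝ H) (Λ : ℕ → ℝ)
    (hpos : ∀ i, 0 < Λ i) (heig : ∀ i, A (b i) = Λ i • b i)
    (hHS : Summable fun i => Λ i ^ 2) :
    ∀ ε : ℝ, 0 < ε → ∃ V : Submodule ℝ H, FiniteDimensional ℝ V ∧
      ∀ (W : Submodule ℝ H), FiniteDimensional ℝ W → W ≤ Vᗮ →
        ∀ (n : ℕ) (e : EuclideanSpace ℝ (Fin n) ≃ₗᵢ[ℝ] W),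
          Measure.map (fun x : Fin n → ℝ => e (WithLp.toLp 2 x))
              (Measure.pi fun _ : Fin n => gaussianReal 0 1)
            {x : W | ε < ‖A (x : H)‖} < ENNReal.ofReal ε := by
  intro ε hε
  -- choose a finite set of eigen-indices with small tail
  have hsum := tendsto_tsum_compl_atTop_zero (fun i : ℕ => Λ i ^ 2)
  obtain ⟨s, hs⟩ := ((tendsto_order.1 hsum).2 (ε ^ 3 / 2) (by positivity)).exists
  refine ⟨Submodule.span ℝ (b '' ↑s), FiniteDimensional.span_of_finite ℝ
    ((s.finite_toSet).image b), ?_⟩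
  intro W _ hW n e
  set μn : Measure (EuclideanSpace ℝ (Fin n)) := Measure.map (MeasurableEquiv.toLp 2 (Fin n → ℝ))
    (Measure.pi fun _ : Fin n => gaussianReal 0 1)
    with hμn
  -- the orthonormal image of the standard basis
  set w : Fin n → H := fun j => ((e (EuclideanSpace.basisFun (Fin n) ℝ j) : W) : H) with hwdef
  have hwW : ∀ j, w j ∈ W := fun j => (e (EuclideanSpace.basisFun (Fin n) ℝ j)).2
  have hw : Orthonormal ℝ w := by
    have h1 : Orthonormal ℝ (fun j => e ((EuclideanSpace.basisFun (Fin n) ℝ) j)) :=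
      ((EuclideanSpace.basisFun (Fin n) ℝ).orthonormal).comp_linearIsometryEquiv e
    exact h1.comp_linearIsometry W.subtypeₗᵢ
  -- coordinates
  have hrepr : ∀ (x : EuclideanSpace ℝ (Fin n)) (v : H),
      ⟪((e x : W) : H), v⟫ = ∑ j, ⟪w j, v⟫ * x j := by
    intro x v
    have h0 : x = ∑ j, x j • (EuclideanSpace.basisFun (Fin n) ℝ) j := by
      have h := (EuclideanSpace.basisFun (Fin n) ℝ).sum_repr x
      simp only [EuclideanSpace.basisFun_repr] at h
      exact h.symm
    have hx : ((e x : W) : H) = ∑ j, x j • w j := by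
      conv_lhs => rw [h0]
      rw [map_sum, Submodule.coe_sum]
      refine Finset.sum_congr rfl fun j _ => ?_
      rw [LinearIsometryEquiv.map_smul]
      rfl
    rw [hx, sum_inner]
    refine Finset.sum_congr rfl fun j _ => ?_
    rw [real_inner_smul_left, mul_comm]
  -- vanishing coordinates on s
  have hcs : ∀ i ∈ s, ∀ j, ⟪w j, b i⟫ = 0 := by
    intro i hi j
    have hbV : b i ∈ Submodule.span ℝ (b '' ↑s) :=
      Submodule.subset_span (Set.mem_image_of_mem b hi)
    have := (Submodule.mem_orthogonal _ (w j)).1 (hW (hwW j)) (b i) hbV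
    rw [real_inner_comm] at this
    exact this
  -- Bessel bound
  have hbessel : ∀ i, ∑ j, ⟪w j, b i⟫ ^ 2 ≤ 1 := by
    intro i
    have h := hw.sum_inner_products_le (x := b i) (s := Finset.univ)
    have hb1 : ‖b i‖ = 1 := b.orthonormal.1 i
    simp only [Real.norm_eq_abs, sq_abs] at h
    rw [hb1] at h
    simpa using h
  -- pointwise spectral expansion
  have hhs : ∀ x : EuclideanSpace ℝ (Fin n),
      HasSum (fun i => (Λ i * ⟪((e x : W) : H), b i⟫) ^ 2) (‖A ((e x : W) : H)‖ ^ 2) :=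
    fun x => spectral_hasSum A b Λ heig _
  set F : EuclideanSpace ℝ (Fin n) → ENNReal :=
    fun x => ENNReal.ofReal (‖A ((e x : W) : H)‖ ^ 2) with hFdef
  -- continuity and measurability
  have hce : Continuous fun x : EuclideanSpace ℝ (Fin n) => ((e x : W) : H) :=
    continuous_subtype_val.comp e.continuous
  have hinner_meas : ∀ i, Measurable fun x : EuclideanSpace ℝ (Fin n) =>
      ⟪((e x : W) : H), b i⟫ := by
    intro i
    exact (hce.inner continuous_const).measurable
  have hFmeas : Measurable F := by
    apply Measurable.ennreal_ofReal
    exact ((A.continuous.comp hce).norm.pow 2).measurable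
  -- the integral bound
  have key : ∫⁻ x, F x ∂μn ≤ ENNReal.ofReal (∑' i : {x // x ∉ s}, Λ (i : ℕ) ^ 2) := by
    have hFeq : ∀ x, F x = ∑' i, ENNReal.ofReal ((Λ i * ⟪((e x : W) : H), b i⟫) ^ 2) := by
      intro x
      rw [hFdef]
      simp only
      rw [← (hhs x).tsum_eq,
        ENNReal.ofReal_tsum_of_nonneg (fun i => sq_nonneg _) (hhs x).summable]
    have hterm : ∀ i, ∫⁻ x, ENNReal.ofReal ((Λ i * ⟪((e x : W) : H), b i⟫) ^ 2) ∂μn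
        = ENNReal.ofReal (Λ i ^ 2 * ∑ j, ⟪w j, b i⟫ ^ 2) := by
      intro i
      obtain ⟨hinti, hvali⟩ := lincomb_sq (gaussianReal 0 1) gauss_integrable_id
        gauss_integrable_sq gauss_mean gauss_variance (c := fun j => ⟪w j, b i⟫)
      have hinti' : Integrable
          (fun x : EuclideanSpace ℝ (Fin n) => (∑ j, ⟪w j, b i⟫ * x j) ^ 2) μn := by
          rw [hμn, integrable_map_equiv]; exact hinti
      have hvali' : ∫ x : EuclideanSpace ℝ (Fin n), (∑ j, ⟪w j, b i⟫ * x j) ^ 2 ∂μn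
          = ∑ j, ⟪w j, b i⟫ ^ 2 := by
          rw [hμn, integral_map_equiv]; exact hvali
      have hpt : ∀ x : EuclideanSpace ℝ (Fin n),
          ENNReal.ofReal ((Λ i * ⟪((e x : W) : H), b i⟫) ^ 2)
          = ENNReal.ofReal (Λ i ^ 2) * ENNReal.ofReal ((∑ j, ⟪w j, b i⟫ * x j) ^ 2) := by
        intro x
        rw [← ENNReal.ofReal_mul (sq_nonneg _)]
        congr 1
        rw [hrepr x (b i)]
        ring
      calc ∫⁻ x, ENNReal.ofReal ((Λ i * ⟪((e x : W) : H), b i⟫) ^ 2) ∂μn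
          = ∫⁻ x, ENNReal.ofReal (Λ i ^ 2)
              * ENNReal.ofReal ((∑ j, ⟪w j, b i⟫ * x j) ^ 2) ∂μn :=
            lintegral_congr hpt
        _ = ENNReal.ofReal (Λ i ^ 2)
              * ∫⁻ x, ENNReal.ofReal ((∑ j, ⟪w j, b i⟫ * x j) ^ 2) ∂μn :=
            lintegral_const_mul' _ _ ENNReal.ofReal_ne_top
        _ = ENNReal.ofReal (Λ i ^ 2) * ENNReal.ofReal (∑ j, ⟪w j, b i⟫ ^ 2) := by
            rw [← ofReal_integral_eq_lintegral_ofReal hinti'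
              (Filter.Eventually.of_forall fun x => sq_nonneg _), hvali']
        _ = ENNReal.ofReal (Λ i ^ 2 * ∑ j, ⟪w j, b i⟫ ^ 2) :=
            (ENNReal.ofReal_mul (sq_nonneg _)).symm
    calc ∫⁻ x, F x ∂μn
        = ∑' i, ∫⁻ x, ENNReal.ofReal ((Λ i * ⟪((e x : W) : H), b i⟫) ^ 2) ∂μn := by
          rw [lintegral_congr hFeq]
          exact lintegral_tsum fun i =>
            (Measurable.ennreal_ofReal (((hinner_meas i).const_mul _).pow_const 2)).aemeasurable
      _ = ∑' i, ENNReal.ofReal (Λ i ^ 2 * ∑ j, ⟪w j, b i⟫ ^ 2) := by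
          exact tsum_congr hterm
      _ ≤ ∑' i, Set.indicator {i : ℕ | i ∉ s} (fun i => ENNReal.ofReal (Λ i ^ 2)) i := by
          refine ENNReal.tsum_le_tsum fun i => ?_
          by_cases hi : i ∈ s
          · have : ∑ j, ⟪w j, b i⟫ ^ 2 = 0 := by
              refine Finset.sum_eq_zero fun j _ => ?_
              rw [hcs i hi j]; ring
            simp [this]
          · rw [Set.indicator_of_mem (by simpa using hi)]
            refine ENNReal.ofReal_le_ofReal ?_
            calc Λ i ^ 2 * ∑ j, ⟪w j, b i⟫ ^ 2 ≤ Λ i ^ 2 * 1 :=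
              mul_le_mul_of_nonneg_left (hbessel i) (sq_nonneg _)
            _ = Λ i ^ 2 := mul_one _
      _ = ∑' i : {x // x ∉ s}, ENNReal.ofReal (Λ (i : ℕ) ^ 2) :=
          (tsum_subtype {i : ℕ | i ∉ s} fun i => ENNReal.ofReal (Λ i ^ 2)).symm
      _ = ENNReal.ofReal (∑' i : {x // x ∉ s}, Λ (i : ℕ) ^ 2) :=
          (ENNReal.ofReal_tsum_of_nonneg (fun i => sq_nonneg _) (hHS.subtype _)).symm
  -- measurability for the map
  have hmeas_e : Measurable fun x : EuclideanSpace ℝ (Fin n) => (e x : W) := by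
    refine Measurable.subtype_mk ?_
    exact hce.measurable
  have hsetmeasH : MeasurableSet {z : H | ε < ‖A z‖} :=
    measurableSet_lt measurable_const (A.continuous.norm.measurable)
  have hsetmeas : MeasurableSet {x : W | ε < ‖A (x : H)‖} :=
    measurable_subtype_coe hsetmeasH
  have hmap : Measure.map (fun x : Fin n → ℝ => e (WithLp.toLp 2 x))
      (Measure.pi fun _ : Fin n => gaussianReal 0 1)
      {x : W | ε < ‖A (x : H)‖} = μn {x | ε < ‖A ((e x : W) : H)‖} := by
    rw [show (fun x : Fin n → ℝ => e (WithLp.toLp 2 x))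
        = (fun x : EuclideanSpace ℝ (Fin n) => e x) ∘ (MeasurableEquiv.toLp 2 (Fin n → ℝ)) from rfl,
      ← Measure.map_map hmeas_e (MeasurableEquiv.toLp 2 (Fin n → ℝ)).measurable, ← hμn,
      Measure.map_apply hmeas_e hsetmeas]
    rfl
  rw [hmap]
  -- Markov / Chebyshev
  have hsub : {x : EuclideanSpace ℝ (Fin n) | ε < ‖A ((e x : W) : H)‖}
      ⊆ {x | ENNReal.ofReal (ε ^ 2) ≤ F x} := by
    intro x hx
    simp only [Set.mem_setOf_eq] at hx ⊢
    exact ENNReal.ofReal_le_ofReal (pow_le_pow_left₀ hε.le hx.le 2)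
  have hmar := mul_meas_ge_le_lintegral₀ hFmeas.aemeasurable (ENNReal.ofReal (ε ^ 2)) (μ := μn)
  have hchain : ENNReal.ofReal (ε ^ 2) * μn {x | ε < ‖A ((e x : W) : H)‖}
      ≤ ENNReal.ofReal (ε ^ 2) * ENNReal.ofReal (ε / 2) := by
    calc ENNReal.ofReal (ε ^ 2) * μn {x | ε < ‖A ((e x : W) : H)‖}
        ≤ ENNReal.ofReal (ε ^ 2) * μn {x | ENNReal.ofReal (ε ^ 2) ≤ F x} :=
          mul_le_mul_right (measure_mono hsub) _
      _ ≤ ∫⁻ x, F x ∂μn := hmar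
      _ ≤ ENNReal.ofReal (∑' i : {x // x ∉ s}, Λ (i : ℕ) ^ 2) := key
      _ ≤ ENNReal.ofReal (ε ^ 3 / 2) := ENNReal.ofReal_le_ofReal hs.le
      _ = ENNReal.ofReal (ε ^ 2) * ENNReal.ofReal (ε / 2) := by
          rw [← ENNReal.ofReal_mul (sq_nonneg _)]
          congr 1
          ring
  have h0 : ENNReal.ofReal (ε ^ 2) ≠ 0 := by
    simp only [ne_eq, ENNReal.ofReal_eq_zero, not_le]
    positivity
  have hle : μn {x | ε < ‖A ((e x : W) : H)‖} ≤ ENNReal.ofReal (ε / 2) :=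
    (ENNReal.mul_le_mul_iff_right h0 ENNReal.ofReal_ne_top).1 hchain
  exact lt_of_le_of_lt hle (by
    rw [ENNReal.ofReal_lt_ofReal_iff hε]
    linarith)
end
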